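/- Let ℓ be an odd prime and let M be the set of all A ∈ GL₂(𝔽_ℓ) having 1 or −1 as an eigenvalue. Then (ℓ − 1) · |M| ≤ 2 · |GL₂(𝔽_ℓ)|. -/

import Mathlib

open Matrix
open scoped MatrixGroups

section Aux

variable {ℓ : ℕ} [Fact ℓ.Prime]

private def wvec (v : Fin 2 → ZMod ℓ) : Fin 2 → ZMod ℓ :=
  if v 0 ≠ 0 then ![0, 1] else ![1, 0]

private lemma wvec_smul {v : Fin 2 → ZMod ℓ} {d : ZMod ℓ} (hd : d ≠ 0) :
    wvec (d • v) = wvec v := by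
  unfold wvec
  by_cases h : v 0 = 0 <;> simp [h, hd]

private lemma wvec_not_smul {v : Fin 2 → ZMod ℓ} (hv : v ≠ 0) (e : ZMod ℓ) :
    wvec v ≠ e • v := by
  unfold wvec
  by_cases h : v 0 = 0
  · simp only [h, ne_eq, not_true_eq_false, if_false]
    intro hc
    have h0 := congrFun hc 0
    simp [h] at h0
  · simp only [ne_eq, h, not_false_eq_true, if_true]
    intro hc
    have h0 := congrFun hc 0
    have h1 := congrFun hc 1
    simp at h0 h1
    rcases h0 with he | hv0
    · rw [he] at h1; simp at h1
    · exact h hv0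

private lemma vec_ext_zero {v : Fin 2 → ZMod ℓ} (h0 : v 0 = 0) (h1 : v 1 = 0) : v = 0 :=
  funext fun i => by fin_cases i <;> assumption

private lemma matrix_eq_of_mulVec_eq {v : Fin 2 → ZMod ℓ} (hv : v ≠ 0)
    {A B : Matrix (Fin 2) (Fin 2) (ZMod ℓ)}
    (h1 : A *ᵥ v = B *ᵥ v) (h2 : A *ᵥ (wvec v) = B *ᵥ (wvec v)) : A = B := by
  have hD1 : (A - B) *ᵥ v = 0 := by rw [sub_mulVec, h1, sub_self]
  have hD2 : (A - B) *ᵥ (wvec v) = 0 := by rw [sub_mulVec, h2, sub_self]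
  set D := A - B with hD
  have hzero : D = 0 := by
    unfold wvec at hD2
    by_cases h : v 0 = 0
    · simp only [h, ne_eq, not_true_eq_false, if_false] at hD2
      have hv1 : v 1 ≠ 0 := fun h1 => hv (vec_ext_zero h h1)
      ext i j
      have e2 := congrFun hD2 i
      have e1 := congrFun hD1 i
      simp [Matrix.mulVec, dotProduct, Fin.sum_univ_two, h] at e2 e1
      rcases e1 with e1 | e1
      · fin_cases j <;> simpa [e2]
      · exact absurd e1 hv1
    · simp only [ne_eq, h, not_false_eq_true, if_true] at hD2
      ext i j
      have e2 := congrFun hD2 i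
      have e1 := congrFun hD1 i
      simp [Matrix.mulVec, dotProduct, Fin.sum_univ_two] at e2
      simp [Matrix.mulVec, dotProduct, Fin.sum_univ_two, e2] at e1
      rcases e1 with e1 | e1
      · fin_cases j <;> simp [e2, e1]
      · exact absurd e1 h
  exact sub_eq_zero.mp (hD ▸ hzero)

private lemma vec_ext2 {v w : Fin 2 → ZMod ℓ} (h0 : v 0 = w 0) (h1 : v 1 = w 1) : v = w :=
  funext fun i => by fin_cases i <;> assumption

private lemma key_card_le :
    (ℓ - 1) * Nat.card {A : GL (Fin 2) (ZMod ℓ) //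
        Matrix.det ((A : Matrix (Fin 2) (Fin 2) (ZMod ℓ)) - 1) = 0} ≤
      Nat.card (GL (Fin 2) (ZMod ℓ)) := by
  classical
  haveI : NeZero ℓ := ⟨(Fact.out : ℓ.Prime).ne_zero⟩
  set K := ZMod ℓ with hK
  let S := {A : GL (Fin 2) K //
      Matrix.det ((A : Matrix (Fin 2) (Fin 2) K) - 1) = 0}
  have hex : ∀ A : S, ∃ v : Fin 2 → K, v ≠ 0 ∧
      (A.1 : Matrix (Fin 2) (Fin 2) K) *ᵥ v = v := by
    intro A
    obtain ⟨v, hv0, hv⟩ := (Matrix.exists_mulVec_eq_zero_iff).mpr A.2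
    refine ⟨v, hv0, ?_⟩
    rw [sub_mulVec, one_mulVec, sub_eq_zero] at hv
    exact hv
  choose vv hvv0 hvv using hex
  let u : S → (Fin 2 → K) := fun A => (A.1 : Matrix (Fin 2) (Fin 2) K) *ᵥ wvec (vv A)
  have hcancel : ∀ (A : S) (x y : Fin 2 → K),
      (A.1 : Matrix (Fin 2) (Fin 2) K) *ᵥ x = (A.1 : Matrix (Fin 2) (Fin 2) K) *ᵥ y → x = y := by
    intro A x y h
    have h2 := congrArg (fun z => ((A.1⁻¹ : GL (Fin 2) K) : Matrix (Fin 2) (Fin 2) K) *ᵥ z) h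
    rw [Matrix.mulVec_mulVec, Matrix.mulVec_mulVec] at h2
    rwa [Units.inv_mul, Matrix.one_mulVec, Matrix.one_mulVec] at h2
  have hu_not : ∀ (A : S) (e : K), u A ≠ e • vv A := by
    intro A e hc
    have : (A.1 : Matrix (Fin 2) (Fin 2) K) *ᵥ wvec (vv A)
        = (A.1 : Matrix (Fin 2) (Fin 2) K) *ᵥ (e • vv A) := by
      rw [Matrix.mulVec_smul, hvv A]
      exact hc
    exact wvec_not_smul (hvv0 A) e (hcancel A _ _ this)
  let Bmat : Kˣ × S → Matrix (Fin 2) (Fin 2) K :=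
    fun p => Matrix.of ![(p.1 : K) • vv p.2, u p.2]
  have hdet : ∀ p : Kˣ × S, Matrix.det (Bmat p) ≠ 0 := by
    intro ⟨c, A⟩ h
    rw [Matrix.det_fin_two] at h
    simp only [Bmat, Matrix.of_apply, Matrix.cons_val', Matrix.cons_val_zero,
      Matrix.cons_val_one, Matrix.head_cons, Matrix.empty_val',
      Matrix.cons_val_fin_one, Matrix.head_fin_const, Pi.smul_apply,
      smul_eq_mul] at h
    have hc0 : (c : K) ≠ 0 := c.ne_zero
    have hspan : ∃ e : K, u A = e • vv A := by
      by_cases h0 : vv A 0 = 0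
      · have h1 : vv A 1 ≠ 0 := fun hx => hvv0 A (vec_ext_zero h0 hx)
        have hz : ((c : K) * vv A 1) * u A 0 = 0 := by
          linear_combination -h + (c : K) * u A 1 * h0
        have hu0 : u A 0 = 0 :=
          (mul_eq_zero.mp hz).resolve_left (mul_ne_zero hc0 h1)
        refine ⟨u A 1 / vv A 1, vec_ext2 ?_ ?_⟩
        · simp [hu0, h0]
        · simp [div_mul_cancel₀ _ h1]
      · have key : vv A 0 * u A 1 = vv A 1 * u A 0 := by
          have hz : (c : K) * (vv A 0 * u A 1 - vv A 1 * u A 0) = 0 := by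
            linear_combination h
          have := (mul_eq_zero.mp hz).resolve_left hc0
          linear_combination this
        refine ⟨u A 0 / vv A 0, vec_ext2 ?_ ?_⟩
        · simp [div_mul_cancel₀ _ h0]
        · simp only [Pi.smul_apply, smul_eq_mul]
          rw [div_mul_eq_mul_div, eq_div_iff h0]
          linear_combination key
    obtain ⟨e, he⟩ := hspan
    exact hu_not A e he
  let Ψ : Kˣ × S → GL (Fin 2) K :=
    fun p => Matrix.GeneralLinearGroup.mkOfDetNeZero (Bmat p) (hdet p)
  have hΨval : ∀ p, (Ψ p : Matrix (Fin 2) (Fin 2) K) = Bmat p := fun p => rfl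
  have hΨinj : Function.Injective Ψ := by
    intro p q hpq
    obtain ⟨c, A⟩ := p
    obtain ⟨c', A'⟩ := q
    have hval : Bmat (c, A) = Bmat (c', A') := by
      rw [← hΨval (c, A), ← hΨval (c', A'), hpq]
    have hrow0 : (c : K) • vv A = (c' : K) • vv A' := by
      have := congrFun hval 0
      exact this
    have hrow1 : u A = u A' := by
      have := congrFun hval 1
      exact this
    have hc'0 : (c' : K) ≠ 0 := c'.ne_zero
    have hc0 : (c : K) ≠ 0 := c.ne_zero
    have hvA' : vv A' = ((c' : K)⁻¹ * (c : K)) • vv A := by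
      have h4 : (c' : K)⁻¹ • ((c' : K) • vv A') = (c' : K)⁻¹ • ((c : K) • vv A) := by
        rw [hrow0]
      rwa [smul_smul, smul_smul, inv_mul_cancel₀ hc'0, one_smul] at h4
    have hd0 : ((c' : K)⁻¹ * (c : K)) ≠ 0 := mul_ne_zero (inv_ne_zero hc'0) hc0
    have hw : wvec (vv A') = wvec (vv A) := by rw [hvA', wvec_smul hd0]
    have hAA' : (A.1 : Matrix (Fin 2) (Fin 2) K) = (A'.1 : Matrix (Fin 2) (Fin 2) K) := by
      apply matrix_eq_of_mulVec_eq (hvv0 A)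
      · have h1 : (A'.1 : Matrix (Fin 2) (Fin 2) K) *ᵥ vv A' = vv A' := hvv A'
        rw [hvA', Matrix.mulVec_smul] at h1
        have h2 : (A'.1 : Matrix (Fin 2) (Fin 2) K) *ᵥ vv A = vv A :=
          smul_right_injective (Fin 2 → K) hd0 h1
        rw [hvv A, h2]
      · have := hrow1
        simp only [u, hw] at this
        exact this
    have hA : A = A' := Subtype.ext (Units.ext hAA')
    subst hA
    have hc : c = c' := by
      obtain ⟨i, hi⟩ := Function.ne_iff.mp (hvv0 A)
      have h3 := congrFun hrow0 i
      simp only [Pi.smul_apply, smul_eq_mul, Pi.zero_apply] at h3 hi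
      exact Units.ext (mul_right_cancel₀ hi h3)
    rw [hc]
  haveI : Finite (GL (Fin 2) K) := by
    unfold K
    infer_instance
  have hle : Nat.card (Kˣ × S) ≤ Nat.card (GL (Fin 2) K) :=
    Nat.card_le_card_of_injective Ψ hΨinj
  have hcardu : Nat.card Kˣ = ℓ - 1 := by
    rw [Nat.card_eq_fintype_card, ZMod.card_units_eq_totient,
      Nat.totient_prime (Fact.out : ℓ.Prime)]
  rw [Nat.card_prod, hcardu] at hle
  exact hle

end Aux

/-- Let `ℓ` be an odd prime and let `M` be the set of all
`A ∈ GL₂(𝔽_ℓ)` having `1` or `−1` as an eigenvalue (i.e. `det (A - 1) = 0` or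
`det (A + 1) = 0`).  Then `(ℓ − 1) * |M| ≤ 2 * |GL₂(𝔽_ℓ)|`. -/
theorem gl2_eigenvalue_pm_one_count (ℓ : ℕ) (hℓ : ℓ.Prime) (hodd : Odd ℓ) :
    (ℓ - 1) * Nat.card {A : GL (Fin 2) (ZMod ℓ) //
        Matrix.det ((A : Matrix (Fin 2) (Fin 2) (ZMod ℓ)) - 1) = 0 ∨
        Matrix.det ((A : Matrix (Fin 2) (Fin 2) (ZMod ℓ)) + 1) = 0} ≤
      2 * Nat.card (GL (Fin 2) (ZMod ℓ)) := by
  classical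
  haveI : Fact ℓ.Prime := ⟨hℓ⟩
  haveI : NeZero ℓ := ⟨hℓ.ne_zero⟩
  let S1 := {A : GL (Fin 2) (ZMod ℓ) //
      Matrix.det ((A : Matrix (Fin 2) (Fin 2) (ZMod ℓ)) - 1) = 0}
  let S2 := {A : GL (Fin 2) (ZMod ℓ) //
      Matrix.det ((A : Matrix (Fin 2) (Fin 2) (ZMod ℓ)) + 1) = 0}
  have hneg : ∀ A : GL (Fin 2) (ZMod ℓ),
      Matrix.det (((-A : GL (Fin 2) (ZMod ℓ)) : Matrix (Fin 2) (Fin 2) (ZMod ℓ)) - 1)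
        = Matrix.det ((A : Matrix (Fin 2) (Fin 2) (ZMod ℓ)) + 1) := by
    intro A
    have h1 : ((-A : GL (Fin 2) (ZMod ℓ)) : Matrix (Fin 2) (Fin 2) (ZMod ℓ))
        = -(A : Matrix (Fin 2) (Fin 2) (ZMod ℓ)) := rfl
    rw [h1, show -(A : Matrix (Fin 2) (Fin 2) (ZMod ℓ)) - 1
      = -((A : Matrix (Fin 2) (Fin 2) (ZMod ℓ)) + 1) by abel, Matrix.det_neg]
    simp
  have hcard21 : Nat.card S2 = Nat.card S1 := by
    refine Nat.card_congr ⟨fun A => ⟨-A.1, ?_⟩, fun A => ⟨-A.1, ?_⟩, ?_, ?_⟩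
    · rw [hneg]; exact A.2
    · have h := hneg (-A.1)
      rw [neg_neg] at h
      rw [← h]
      exact A.2
    · intro A; simp
    · intro A; simp
  have hinj : Function.Injective (fun A : {A : GL (Fin 2) (ZMod ℓ) //
        Matrix.det ((A : Matrix (Fin 2) (Fin 2) (ZMod ℓ)) - 1) = 0 ∨
        Matrix.det ((A : Matrix (Fin 2) (Fin 2) (ZMod ℓ)) + 1) = 0} =>
      if h : Matrix.det ((A.1 : Matrix (Fin 2) (Fin 2) (ZMod ℓ)) - 1) = 0
        then (Sum.inl ⟨A.1, h⟩ : S1 ⊕ S2)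
        else Sum.inr ⟨A.1, A.2.resolve_left h⟩) := by
    intro A B hAB
    simp only at hAB
    split_ifs at hAB
    all_goals
      injection hAB with h
      rw [Subtype.mk.injEq] at h
      exact Subtype.ext h
  have hM := Nat.card_le_card_of_injective _ hinj
  rw [Nat.card_sum, hcard21] at hM
  have hkey : (ℓ - 1) * Nat.card S1 ≤ Nat.card (GL (Fin 2) (ZMod ℓ)) := key_card_le
  calc (ℓ - 1) * Nat.card {A : GL (Fin 2) (ZMod ℓ) //
        Matrix.det ((A : Matrix (Fin 2) (Fin 2) (ZMod ℓ)) - 1) = 0 ∨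
        Matrix.det ((A : Matrix (Fin 2) (Fin 2) (ZMod ℓ)) + 1) = 0}
      ≤ (ℓ - 1) * (Nat.card S1 + Nat.card S1) := Nat.mul_le_mul_left _ hM
    _ = 2 * ((ℓ - 1) * Nat.card S1) := by ring
    _ ≤ 2 * Nat.card (GL (Fin 2) (ZMod ℓ)) := Nat.mul_le_mul_left _ hkey
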